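/- arXiv:2507.22957 — 2 statements merged into one kernel-verified Lean document; each statement's English description precedes it below -/
import Mathlib

section
/- Let G be a graph without isolated vertices and H a dilation of G in which every hyperedge contains at least one additional vertex. Then ν(H) ≤ γ(H) ≤ 2ν(H). -/
open Finset

/-- Two vertices of a hypergraph (given by its finite set of hyperedges) are
adjacent if they are distinct and lie in a common hyperedge. -/
def HypAdj {W : Type*} (E : Finset (Finset W)) (u v : W) : Prop :=
  u ≠ v ∧ ∃ e ∈ E, u ∈ e ∧ v ∈ e

/-- A matching of a hypergraph: a set of pairwise disjoint hyperedges. -/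
def IsHypMatching {W : Type*} (E M : Finset (Finset W)) : Prop :=
  M ⊆ E ∧ ∀ a ∈ M, ∀ b ∈ M, a ≠ b → Disjoint a b

/-- Matching number of a hypergraph. -/
noncomputable def nuH {W : Type*} (E : Finset (Finset W)) : ℕ :=
  sSup {n | ∃ M : Finset (Finset W), IsHypMatching E M ∧ M.card = n}

/-- A transversal (vertex cover) of a hypergraph: meets every hyperedge. -/
def IsTransversal {W : Type*} (E : Finset (Finset W)) (T : Finset W) : Prop :=
  ∀ e ∈ E, ∃ w ∈ T, w ∈ e

/-- Transversal number of a hypergraph. -/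
noncomputable def tauH {W : Type*} (E : Finset (Finset W)) : ℕ :=
  sInf {n | ∃ T : Finset W, IsTransversal E T ∧ T.card = n}

/-- A dominating set of a hypergraph: every vertex outside it is adjacent
(shares a hyperedge) with some vertex inside it. -/
def IsDominatingH {W : Type*} (E : Finset (Finset W)) (D : Finset W) : Prop :=
  ∀ v, v ∉ D → ∃ u ∈ D, HypAdj E u v

/-- Domination number of a hypergraph on the (finite) vertex type `W`. -/
noncomputable def gammaH {W : Type*} (E : Finset (Finset W)) : ℕ :=
  sInf {n | ∃ D : Finset W, IsDominatingH E D ∧ D.card = n}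

/-- The two-element finset associated to an unordered pair. -/
noncomputable def sym2ToFinset {V : Type*} (e : Sym2 V) : Finset V := by
  classical exact Sym2.lift ⟨fun a b => ({a, b} : Finset V), fun a b => Finset.pair_comm a b⟩ e

/-- The edges of a simple graph, viewed as the hyperedges (of size two)
of a 2-uniform hypergraph. -/
noncomputable def graphEdges {V : Type*} [Fintype V] (G : SimpleGraph V) :
    Finset (Finset V) := by
  classical exact ((Finset.univ : Finset (Sym2 V)).filter (· ∈ G.edgeSet)).image sym2ToFinset

/-- A dominating set of a simple graph. -/
def IsDominatingG {V : Type*} (G : SimpleGraph V) (D : Finset V) : Prop :=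
  ∀ v, v ∉ D → ∃ u ∈ D, G.Adj u v

/-- Domination number of a simple graph. -/
noncomputable def gammaG {V : Type*} [Fintype V] (G : SimpleGraph V) : ℕ :=
  sInf {n | ∃ D : Finset V, IsDominatingG G D ∧ D.card = n}

/-- A Berge-`G` hypergraph on vertex type `W`: an injection `i` of the vertices
of `G` and a bijection `f` from the edges of `G` to the hyperedges `EH`,
such that each edge of `G` is embedded in the corresponding hyperedge. -/
structure BergeG {V : Type*} (G : SimpleGraph V) (W : Type*) where
  EH : Finset (Finset W)
  i : V ↪ W
  f : Sym2 V → Finset W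
  f_mem : ∀ ⦃e⦄, e ∈ G.edgeSet → f e ∈ EH
  f_inj : ∀ ⦃e e'⦄, e ∈ G.edgeSet → e' ∈ G.edgeSet → f e = f e' → e = e'
  f_surj : ∀ h ∈ EH, ∃ e ∈ G.edgeSet, f e = h
  contains : ∀ ⦃u v⦄, G.Adj u v → i u ∈ f s(u, v) ∧ i v ∈ f s(u, v)

/-- A dilation of a simple graph `G`, on the vertex type `W`: each vertex `v` of `G`
is blown up to a finset `vset v` containing the support vertex `supp v`, each edge `e`
of `G` gets a (possibly empty) finset `eset e` of additional vertices, all these finsets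
being pairwise disjoint and covering `W`; the hyperedge corresponding to the edge
`e = {u,v}` is `vset u ∪ vset v ∪ eset e`, and all hyperedges have size at most the
rank `k ≥ 3`. -/
structure GraphDilation {V : Type*} (G : SimpleGraph V) (W : Type*) where
  vset : V → Finset W
  supp : V → W
  eset : Sym2 V → Finset W
  k : ℕ
  k_ge : 3 ≤ k
  supp_mem : ∀ v, supp v ∈ vset v
  vset_disj : ∀ ⦃u v : V⦄, u ≠ v → Disjoint (vset u) (vset v)
  eset_disj : ∀ ⦃e f : Sym2 V⦄, e ∈ G.edgeSet → f ∈ G.edgeSet → e ≠ f →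
    Disjoint (eset e) (eset f)
  vset_eset_disj : ∀ (v : V), ∀ ⦃e : Sym2 V⦄, e ∈ G.edgeSet → Disjoint (vset v) (eset e)
  card_le : ∀ ⦃u v : V⦄, G.Adj u v →
    (vset u).card + (vset v).card + (eset s(u, v)).card ≤ k
  cover : ∀ w : W, (∃ v : V, w ∈ vset v) ∨ (∃ e ∈ G.edgeSet, w ∈ eset e)

/-- The hyperedge of a dilation corresponding to an edge `e` of the support graph. -/
noncomputable def GraphDilation.hedge {V W : Type*} {G : SimpleGraph V} (D : GraphDilation G W)
    (e : Sym2 V) : Finset W := by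
  classical exact (sym2ToFinset e).biUnion D.vset ∪ D.eset e

/-- The hyperedge set of a dilation. -/
noncomputable def GraphDilation.edges {V W : Type*} [Fintype V] {G : SimpleGraph V}
    (D : GraphDilation G W) : Finset (Finset W) := by
  classical exact ((Finset.univ : Finset (Sym2 V)).filter (· ∈ G.edgeSet)).image D.hedge


open scoped Classical

lemma sym2ToFinset_pair {V : Type*} (a b : V) : sym2ToFinset s(a, b) = {a, b} := rfl

lemma mem_sym2ToFinset {V : Type*} {x : V} {e : Sym2 V} :
    x ∈ sym2ToFinset e ↔ x ∈ e := by
  induction e using Sym2.ind with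
  | _ a b => simp [sym2ToFinset_pair, Sym2.mem_iff]

lemma card_sym2ToFinset_le {V : Type*} (e : Sym2 V) : (sym2ToFinset e).card ≤ 2 := by
  induction e using Sym2.ind with
  | _ a b =>
    rw [sym2ToFinset_pair]
    exact (Finset.card_insert_le _ _).trans (by simp)

lemma mem_hedge {V W : Type*} {G : SimpleGraph V} (D : GraphDilation G W)
    {e : Sym2 V} {w : W} :
    w ∈ D.hedge e ↔ (∃ a ∈ e, w ∈ D.vset a) ∨ w ∈ D.eset e := by
  simp [GraphDilation.hedge, mem_sym2ToFinset]

lemma mem_edges {V W : Type*} [Fintype V] {G : SimpleGraph V} (D : GraphDilation G W)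
    {h : Finset W} :
    h ∈ D.edges ↔ ∃ e ∈ G.edgeSet, D.hedge e = h := by
  simp [GraphDilation.edges]

lemma hedge_nonempty {V W : Type*} {G : SimpleGraph V} (D : GraphDilation G W)
    (e : Sym2 V) : (D.hedge e).Nonempty :=
  ⟨D.supp e.out.1, (mem_hedge D).mpr (Or.inl ⟨e.out.1, Sym2.out_fst_mem e, D.supp_mem _⟩)⟩

lemma dilation_inter {V W : Type*} {G : SimpleGraph V} (D : GraphDilation G W)
    {e e' : Sym2 V} (he : e ∈ G.edgeSet) (he' : e' ∈ G.edgeSet) (hne : e ≠ e')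
    {x : W} (hx : x ∈ D.hedge e) (hx' : x ∈ D.hedge e') :
    ∃ c, c ∈ e ∧ c ∈ e' ∧ x ∈ D.vset c := by
  rw [mem_hedge] at hx hx'
  rcases hx with ⟨a, ha, hxa⟩ | hxe
  · rcases hx' with ⟨a', ha', hxa'⟩ | hxe'
    · rcases eq_or_ne a a' with rfl | hnea
      · exact ⟨a, ha, ha', hxa⟩
      · exact absurd hxa' (Finset.disjoint_left.mp (D.vset_disj hnea) hxa)
    · exact absurd hxe' (Finset.disjoint_left.mp (D.vset_eset_disj a he') hxa)
  · rcases hx' with ⟨a', ha', hxa'⟩ | hxe'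
    · exact absurd hxe (Finset.disjoint_left.mp (D.vset_eset_disj a' he) hxa')
    · exact absurd hxe' (Finset.disjoint_left.mp (D.eset_disj he he' hne) hxe)

lemma eset_hedge_eq {V W : Type*} {G : SimpleGraph V} (D : GraphDilation G W)
    {e e' : Sym2 V} (he : e ∈ G.edgeSet) (he' : e' ∈ G.edgeSet)
    {w : W} (hw : w ∈ D.eset e) (hw' : w ∈ D.hedge e') : e' = e := by
  rw [mem_hedge] at hw'
  rcases hw' with ⟨a', _, hwa'⟩ | hwe'
  · exact absurd hw (Finset.disjoint_left.mp (D.vset_eset_disj a' he) hwa')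
  · by_contra hne
    exact (Finset.disjoint_left.mp (D.eset_disj he' he hne) hwe') hw

lemma matching_le_dominating {V W : Type*} [Fintype V] {G : SimpleGraph V}
    (D : GraphDilation G W) (hadd : ∀ e ∈ G.edgeSet, (D.eset e).Nonempty)
    {M : Finset (Finset W)} (hM : IsHypMatching D.edges M)
    {Dd : Finset W} (hDd : IsDominatingH D.edges Dd) : M.card ≤ Dd.card := by
  classical
  rcases M.eq_empty_or_nonempty with rfl | ⟨h0, hh0⟩
  · simp
  have hWne : Nonempty W := by
    obtain ⟨e0x, _, he0x⟩ := (mem_edges D).mp (hM.1 hh0)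
    exact ⟨(hedge_nonempty D e0x).choose⟩
  have key : ∀ h, h ∈ M → ∃ d, d ∈ Dd ∧ d ∈ h := by
    intro h hh
    obtain ⟨e, he, rfl⟩ := (mem_edges D).mp (hM.1 hh)
    obtain ⟨w, hw⟩ := hadd e he
    by_cases hwD : w ∈ Dd
    · exact ⟨w, hwD, (mem_hedge D).mpr (Or.inr hw)⟩
    · obtain ⟨u, huD, _, h', hh', hu', hw'⟩ := hDd w hwD
      obtain ⟨e', he', rfl⟩ := (mem_edges D).mp hh'
      have : e' = e := eset_hedge_eq D he he' hw hw'
      subst this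
      exact ⟨u, huD, hu'⟩
  choose! d hd1 hd2 using key
  apply Finset.card_le_card_of_injOn d (fun h hh => hd1 h hh)
  intro h1 h1m h2 h2m hEq
  by_contra hne
  have hdisj := hM.2 h1 (Finset.mem_coe.mp h1m) h2 (Finset.mem_coe.mp h2m) hne
  exact (Finset.disjoint_left.mp hdisj (hd2 h1 (Finset.mem_coe.mp h1m)))
    (hEq ▸ hd2 h2 (Finset.mem_coe.mp h2m))

theorem dilation_nu_le_gamma_le_two_nu {V W : Type*} [Fintype V] (G : SimpleGraph V)
    (hiso : ∀ v : V, ∃ u : V, G.Adj v u)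
    (D : GraphDilation G W) (hadd : ∀ e ∈ G.edgeSet, (D.eset e).Nonempty) :
    nuH D.edges ≤ gammaH D.edges ∧ gammaH D.edges ≤ 2 * nuH D.edges := by
  classical
  rcases isEmpty_or_nonempty V with hV | hV
  · have hE : D.edges = ∅ := by
      have huniv : (Finset.univ : Finset (Sym2 V)) = ∅ := Finset.univ_eq_empty
      simp [GraphDilation.edges, huniv]
    have hWe : IsEmpty W := ⟨fun w => by
      rcases D.cover w with ⟨v, _⟩ | ⟨e, _, _⟩
      · exact hV.elim v
      · exact hV.elim e.out.1⟩
    have hnu : nuH D.edges ≤ 0 := by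
      have h0S : (0 : ℕ) ∈ {n | ∃ M : Finset (Finset W), IsHypMatching D.edges M ∧ M.card = n} :=
        ⟨∅, ⟨Finset.empty_subset _, by simp⟩, rfl⟩
      apply csSup_le ⟨0, h0S⟩
      rintro n ⟨M, hM, rfl⟩
      simpa [hE] using Finset.card_le_card hM.1
    have hga : gammaH D.edges ≤ 0 := Nat.sInf_le ⟨∅, fun v _ => (hWe.elim v), rfl⟩
    omega
  set S := {n | ∃ M : Finset (Finset W), IsHypMatching D.edges M ∧ M.card = n} with hSdef
  have h0S : (0 : ℕ) ∈ S := ⟨∅, ⟨Finset.empty_subset _, by simp⟩, rfl⟩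
  have hbdd : BddAbove S := by
    refine ⟨D.edges.card, ?_⟩
    rintro n ⟨M, hM, rfl⟩
    exact Finset.card_le_card hM.1
  -- a dominating set exists (everything)
  have hT0 : ({n | ∃ Dd : Finset W, IsDominatingH D.edges Dd ∧ Dd.card = n} : Set ℕ).Nonempty := by
    refine ⟨_, (Finset.univ.biUnion D.vset ∪
      ((Finset.univ : Finset (Sym2 V)).filter (· ∈ G.edgeSet)).biUnion D.eset), ?_, rfl⟩
    intro v hv
    exfalso
    apply hv
    rcases D.cover v with ⟨u, hu⟩ | ⟨e, he, hve⟩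
    · exact Finset.mem_union_left _ (Finset.mem_biUnion.mpr ⟨u, Finset.mem_univ u, hu⟩)
    · exact Finset.mem_union_right _ (Finset.mem_biUnion.mpr
        ⟨e, Finset.mem_filter.mpr ⟨Finset.mem_univ e, he⟩, hve⟩)
  obtain ⟨Dmin, hDmin, hDcard⟩ := Nat.sInf_mem hT0
  have h1 : nuH D.edges ≤ gammaH D.edges := by
    have hub : ∀ n ∈ S, n ≤ Dmin.card := by
      rintro n ⟨M, hM, rfl⟩
      exact matching_le_dominating D hadd hM hDmin
    calc nuH D.edges = sSup S := rfl
      _ ≤ Dmin.card := csSup_le ⟨0, h0S⟩ hub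
      _ = gammaH D.edges := hDcard
  -- maximum matching
  obtain ⟨Mx, hMx, hMxcard⟩ := Nat.sSup_mem ⟨0, h0S⟩ hbdd
  have hmax : ∀ e0 ∈ G.edgeSet, ∃ h ∈ Mx, ¬ Disjoint (D.hedge e0) h := by
    intro e0 he0
    by_contra hc
    push_neg at hc
    have hnotmem : D.hedge e0 ∉ Mx := by
      intro hmem
      have hd := disjoint_self.mp (hc _ hmem)
      exact (hedge_nonempty D e0).ne_empty hd
    have hmatch : IsHypMatching D.edges (insert (D.hedge e0) Mx) := by
      constructor
      · intro h hh
        rcases Finset.mem_insert.mp hh with rfl | hh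
        · exact (mem_edges D).mpr ⟨e0, he0, rfl⟩
        · exact hMx.1 hh
      · intro a ha b hb hab
        rcases Finset.mem_insert.mp ha with rfl | ha <;>
          rcases Finset.mem_insert.mp hb with rfl | hb
        · exact absurd rfl hab
        · exact hc _ hb
        · exact (hc _ ha).symm
        · exact hMx.2 a ha b hb hab
    have hmem : (insert (D.hedge e0) Mx).card ∈ S := ⟨_, hmatch, rfl⟩
    have hle := le_csSup hbdd hmem
    rw [Finset.card_insert_of_notMem hnotmem, ← hMxcard] at hle
    omega
  have hMe : ∀ h, h ∈ Mx → ∃ e, e ∈ G.edgeSet ∧ D.hedge e = h :=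
    fun h hh => (mem_edges D).mp (hMx.1 hh)
  have _instS : Nonempty (Sym2 V) := ⟨s(Classical.arbitrary V, Classical.arbitrary V)⟩
  choose! φ hφ1 hφ2 using hMe
  set Dset := Mx.biUnion (fun h => (sym2ToFinset (φ h)).image D.supp) with hDsetdef
  have hcard : Dset.card ≤ 2 * Mx.card := by
    calc Dset.card ≤ ∑ h ∈ Mx, ((sym2ToFinset (φ h)).image D.supp).card :=
          Finset.card_biUnion_le
      _ ≤ ∑ _h ∈ Mx, 2 := Finset.sum_le_sum
          (fun h _ => (Finset.card_image_le).trans (card_sym2ToFinset_le _))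
      _ = 2 * Mx.card := by rw [Finset.sum_const, smul_eq_mul, mul_comm]
  have hdom : IsDominatingH D.edges Dset := by
    intro w hw
    obtain ⟨e0, he0, hwe0⟩ : ∃ e0 ∈ G.edgeSet, w ∈ D.hedge e0 := by
      rcases D.cover w with ⟨v, hv⟩ | ⟨e, he, hwe⟩
      · obtain ⟨u, hu⟩ := hiso v
        exact ⟨s(v, u), hu, (mem_hedge D).mpr (Or.inl ⟨v, by simp, hv⟩)⟩
      · exact ⟨e, he, (mem_hedge D).mpr (Or.inr hwe)⟩
    obtain ⟨h, hhM, hnd⟩ := hmax e0 he0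
    obtain ⟨x, hx, hx'⟩ := Finset.not_disjoint_iff.mp hnd
    have hφe := hφ1 h hhM
    have hφh := hφ2 h hhM
    have hxh : x ∈ D.hedge (φ h) := by rw [hφh]; exact hx'
    obtain ⟨c, hc0, hcφ⟩ : ∃ c, c ∈ e0 ∧ c ∈ (φ h) := by
      rcases eq_or_ne e0 (φ h) with heq | hne
      · exact ⟨e0.out.1, Sym2.out_fst_mem e0, heq ▸ Sym2.out_fst_mem e0⟩
      · obtain ⟨c, hc1, hc2, _⟩ := dilation_inter D he0 hφe hne hx hxh
        exact ⟨c, hc1, hc2⟩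
    have hmemD : D.supp c ∈ Dset := Finset.mem_biUnion.mpr
      ⟨h, hhM, Finset.mem_image.mpr ⟨c, mem_sym2ToFinset.mpr hcφ, rfl⟩⟩
    refine ⟨D.supp c, hmemD, ?_, D.hedge e0, (mem_edges D).mpr ⟨e0, he0, rfl⟩,
      (mem_hedge D).mpr (Or.inl ⟨c, hc0, D.supp_mem c⟩), hwe0⟩
    intro heq
    exact hw (heq ▸ hmemD)
  refine ⟨h1, ?_⟩
  calc gammaH D.edges ≤ Dset.card := Nat.sInf_le ⟨Dset, hdom, rfl⟩
    _ ≤ 2 * Mx.card := hcard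
    _ = 2 * nuH D.edges := by rw [hMxcard]; rfl
end

section
/- For every integers n ≥ 2 and 2 ≤ r ≤ n − 1, the graph G'_r obtained from the complete graph K_{2n} by deleting all edges within a fixed set of r vertices satisfies ν(G'_r) = n and τ(G'_r) = 2n − r. -/
open Finset

section Aux

lemma sym2ToFinset_mk {V : Type*} [DecidableEq V] (a b : V) :
    sym2ToFinset s(a, b) = ({a, b} : Finset V) := by
  ext x; simp [sym2ToFinset]

lemma mem_graphEdges {V : Type*} [Fintype V] [DecidableEq V] {G : SimpleGraph V} {e : Finset V} :
    e ∈ graphEdges G ↔ ∃ u v, G.Adj u v ∧ e = {u, v} := by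
  classical
  simp only [graphEdges, Finset.mem_image, Finset.mem_filter, Finset.mem_univ, true_and]
  constructor
  · rintro ⟨s, hs, rfl⟩
    induction s using Sym2.ind with
    | _ a b => exact ⟨a, b, hs, sym2ToFinset_mk a b⟩
  · rintro ⟨u, v, huv, rfl⟩
    exact ⟨s(u, v), huv, sym2ToFinset_mk u v⟩

end Aux

theorem nu_tau_complete_minus_clique (n r : ℕ) (hn : 2 ≤ n) (hr : 2 ≤ r)
    (hrn : r ≤ n - 1)
    (S : Finset (Fin (2 * n))) (hS : S.card = r)
    (G' : SimpleGraph (Fin (2 * n)))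
    (hG' : ∀ u v : Fin (2 * n), G'.Adj u v ↔ u ≠ v ∧ ¬(u ∈ S ∧ v ∈ S)) :
    nuH (graphEdges G') = n ∧ tauH (graphEdges G') = 2 * n - r := by
  classical
  have h2n : Fintype.card (Fin (2 * n)) = 2 * n := Fintype.card_fin _
  have hrlt : r < n := by omega
  have hScc : Sᶜ.card = 2 * n - r := by
    rw [Finset.card_compl, h2n, hS]
  -- The list: S first, then the complement
  set L : List (Fin (2 * n)) := S.sort (· ≤ ·) ++ Sᶜ.sort (· ≤ ·) with hLdef
  have hlen1 : (S.sort (· ≤ ·)).length = r := by rw [Finset.length_sort, hS]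
  have hlen : L.length = 2 * n := by
    rw [hLdef, List.length_append, hlen1, Finset.length_sort, hScc]; omega
  have hnd : L.Nodup := by
    refine List.Nodup.append (Finset.sort_nodup _ _) (Finset.sort_nodup _ _) ?_
    intro x hx hx'
    rw [Finset.mem_sort] at hx hx'
    exact (Finset.mem_compl.mp hx') hx
  set d : Fin (2 * n) := ⟨0, by omega⟩ with hd
  set f : ℕ → Fin (2 * n) := fun i => L.getD i d with hf
  have hfget : ∀ i (h : i < 2 * n), f i = L[i]'(by omega) := by
    intro i h
    exact List.getD_eq_getElem L d (by omega)
  have hmemS : ∀ i, i < r → f i ∈ S := by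
    intro i hi
    rw [hfget i (by omega)]
    have : L[i]'(by omega) = (S.sort (· ≤ ·))[i]'(by omega) :=
      List.getElem_append_left (by omega)
    rw [this]
    exact (Finset.mem_sort _).mp (List.getElem_mem _)
  have hmemSc : ∀ i, r ≤ i → i < 2 * n → f i ∉ S := by
    intro i hri hi
    rw [hfget i hi]
    have hri' : (S.sort (· ≤ ·)).length ≤ i := by omega
    have : L[i]'(by omega) = (Sᶜ.sort (· ≤ ·))[i - (S.sort (· ≤ ·)).length]'(by
        simp only [Finset.length_sort, hScc, hS]; omega) :=
      List.getElem_append_right hri'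
    rw [this]
    exact Finset.mem_compl.mp ((Finset.mem_sort _).mp (List.getElem_mem _))
  have hinj : ∀ i j, i < 2 * n → j < 2 * n → f i = f j → i = j := by
    intro i j hi hj hij
    rw [hfget i hi, hfget j hj] at hij
    exact (List.Nodup.getElem_inj_iff hnd).mp hij
  -- The perfect matching
  set M : Finset (Finset (Fin (2 * n))) :=
    (Finset.range n).image (fun i => ({f i, f (i + n)} : Finset (Fin (2 * n)))) with hM
  have hadj : ∀ i, i < n → G'.Adj (f i) (f (i + n)) := by
    intro i hi
    rw [hG']
    refine ⟨fun h => ?_, fun h => ?_⟩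
    · have := hinj i (i + n) (by omega) (by omega) h; omega
    · exact hmemSc (i + n) (by omega) (by omega) h.2
  have hMsub : M ⊆ graphEdges G' := by
    intro a ha
    obtain ⟨i, hi, rfl⟩ := Finset.mem_image.mp ha
    rw [Finset.mem_range] at hi
    exact mem_graphEdges.mpr ⟨f i, f (i + n), hadj i hi, rfl⟩
  have hMmatch : IsHypMatching (graphEdges G') M := by
    refine ⟨hMsub, ?_⟩
    intro a ha b hb hab
    obtain ⟨i, hi, rfl⟩ := Finset.mem_image.mp ha
    obtain ⟨j, hj, rfl⟩ := Finset.mem_image.mp hb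
    rw [Finset.mem_range] at hi hj
    have hij : i ≠ j := fun h => hab (by rw [h])
    rw [Finset.disjoint_left]
    intro x hx hx'
    simp only [Finset.mem_insert, Finset.mem_singleton] at hx hx'
    rcases hx with rfl | rfl <;> rcases hx' with h | h <;>
      · have := hinj _ _ (by omega) (by omega) h; omega
  have hMcard : M.card = n := by
    rw [hM, Finset.card_image_of_injOn, Finset.card_range]
    intro i hi j hj hij
    rw [Finset.mem_coe, Finset.mem_range] at hi hj
    have : f i ∈ ({f j, f (j + n)} : Finset (Fin (2 * n))) := by
      dsimp only at hij
      rw [← hij]; exact Finset.mem_insert_self _ _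
    simp only [Finset.mem_insert, Finset.mem_singleton] at this
    rcases this with h | h <;>
      · have := hinj _ _ (by omega) (by omega) h; omega
  -- upper bound on matchings
  have hbdd : ∀ m ∈ {m | ∃ M : Finset (Finset (Fin (2 * n))),
      IsHypMatching (graphEdges G') M ∧ M.card = m}, m ≤ n := by
    rintro m ⟨N, ⟨hsub, hdisj⟩, rfl⟩
    have hcard2 : ∀ e ∈ N, e.card = 2 := by
      intro e he
      obtain ⟨u, v, huv, rfl⟩ := mem_graphEdges.mp (hsub he)
      exact Finset.card_pair huv.ne
    have hbu : (N.biUnion (fun e => e)).card = 2 * N.card := by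
      rw [Finset.card_biUnion (fun a ha b hb hab => hdisj a ha b hb hab)]
      rw [Finset.sum_congr rfl hcard2, Finset.sum_const, smul_eq_mul, mul_comm]
    have hle : (N.biUnion (fun e => e)).card ≤ 2 * n := by
      have := Finset.card_le_univ (N.biUnion (fun e => e))
      rwa [h2n] at this
    omega
  have hmemb : (n : ℕ) ∈ {m | ∃ M : Finset (Finset (Fin (2 * n))),
      IsHypMatching (graphEdges G') M ∧ M.card = m} := ⟨M, hMmatch, hMcard⟩
  constructor
  · exact le_antisymm (csSup_le ⟨n, hmemb⟩ hbdd) (le_csSup ⟨n, hbdd⟩ hmemb)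
  · -- tau
    have htrans : IsTransversal (graphEdges G') Sᶜ := by
      intro e he
      obtain ⟨u, v, huv, rfl⟩ := mem_graphEdges.mp he
      rw [hG'] at huv
      by_cases hu : u ∈ S
      · have hv : v ∉ S := fun hv => huv.2 ⟨hu, hv⟩
        exact ⟨v, Finset.mem_compl.mpr hv,
          Finset.mem_insert_of_mem (Finset.mem_singleton_self v)⟩
      · exact ⟨u, Finset.mem_compl.mpr hu, Finset.mem_insert_self u _⟩
    have hmemt : (2 * n - r) ∈ {m | ∃ T : Finset (Fin (2 * n)),
        IsTransversal (graphEdges G') T ∧ T.card = m} := ⟨Sᶜ, htrans, hScc⟩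
    refine le_antisymm (Nat.sInf_le hmemt) (le_csInf ⟨_, hmemt⟩ ?_)
    rintro m ⟨T, hT, rfl⟩
    set U := (Finset.univ : Finset (Fin (2 * n))) \ T with hU
    have hUcard : U.card = 2 * n - T.card := by
      rw [hU, Finset.card_sdiff_of_subset (Finset.subset_univ T), Finset.card_univ, h2n]
    have hTle : T.card ≤ 2 * n := by
      have := Finset.card_le_univ T; rwa [h2n] at this
    have hkey : ∀ u ∈ U, ∀ v ∈ U, u ≠ v → u ∈ S ∧ v ∈ S := by
      intro u hu v hv huv
      by_contra hns
      have hadj : G'.Adj u v := (hG' u v).mpr ⟨huv, hns⟩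
      obtain ⟨w, hwT, hwe⟩ := hT {u, v} (mem_graphEdges.mpr ⟨u, v, hadj, rfl⟩)
      simp only [Finset.mem_insert, Finset.mem_singleton] at hwe
      rw [hU, Finset.mem_sdiff] at hu hv
      rcases hwe with rfl | rfl
      · exact hu.2 hwT
      · exact hv.2 hwT
    have hUr : U.card ≤ r := by
      by_cases hsub : U ⊆ S
      · rw [← hS]; exact Finset.card_le_card hsub
      · obtain ⟨u, hu, huS⟩ := Finset.not_subset.mp hsub
        have : U ⊆ {u} := by
          intro v hv
          rw [Finset.mem_singleton]
          by_contra hne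
          exact huS (hkey u hu v hv (Ne.symm hne)).1
        calc U.card ≤ 1 := by simpa using Finset.card_le_card this
          _ ≤ r := by omega
    omega
end
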